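/- arXiv:0909.1094 — 2 statements merged into one kernel-verified Lean document; each statement's English description precedes it below -/
import Mathlib

section
/- Let (M, dist) be a metric space, f : M → M a map, and g : M → ℝ a Hölder continuous function with constant C ≥ 0 and exponent α ∈ (0, 1], i.e. |g(x) − g(y)| ≤ C·dist(x, y)^α for all x, y ∈ M. Let λ, λ_u ∈ (0, 1), ε > 0, n ≥ 1, and let y, z ∈ M be points whose orbits shadow each other in the hyperbolic fashion dist(f^i(y), f^i(z)) ≤ ε·(λ^i + λ_u^{n−1−i}) for all 0 ≤ i ≤ n−1. Then |∑_{i=0}^{n−1} g(f^i(y)) − ∑_{i=0}^{n−1} g(f^i(z))| ≤ C·ε^α·(1/(1 − λ^α) + 1/(1 − λ_u^α)); in particular the difference of the Birkhoff averages (1/n)∑_{i<n} g(f^i(y)) and (1/n)∑_{i<n} g(f^i(z)) is bounded by this constant divided by n, uniformly in n. -/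
lemma real_rpow_add_le {a b p : ℝ} (ha : 0 ≤ a) (hb : 0 ≤ b) (hp : 0 ≤ p) (hp1 : p ≤ 1) :
    (a + b) ^ p ≤ a ^ p + b ^ p := by
  lift a to NNReal using ha
  lift b to NNReal using hb
  have := NNReal.rpow_add_le_add_rpow a b hp hp1
  exact_mod_cast this

/-- Hölder shadowing estimate for Birkhoff sums: if `g` is `(C, α)`-Hölder
and the orbits of `y` and `z` satisfy
`dist (f^[i] y) (f^[i] z) ≤ ε (λ^i + λᵤ^(n-1-i))` for `0 ≤ i ≤ n-1`, then the Birkhoff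
sums of `g` along the two orbits differ by at most
`C ε^α (1/(1-λ^α) + 1/(1-λᵤ^α))`, uniformly in `n`; in particular the Birkhoff averages
differ by at most this constant divided by `n`. -/
theorem holder_birkhoff_shadowing
    {M : Type*} [MetricSpace M] (f : M → M) (g : M → ℝ)
    (C : ℝ) (hC : 0 ≤ C) (α : ℝ) (hα0 : 0 < α) (hα1 : α ≤ 1)
    (hg : ∀ x y : M, |g x - g y| ≤ C * dist x y ^ α)
    (lam lamu : ℝ) (hlam : lam ∈ Set.Ioo (0 : ℝ) 1) (hlamu : lamu ∈ Set.Ioo (0 : ℝ) 1)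
    (ε : ℝ) (hε : 0 < ε) (n : ℕ) (hn : 1 ≤ n) (y z : M)
    (hshadow : ∀ i < n, dist (f^[i] y) (f^[i] z) ≤ ε * (lam ^ i + lamu ^ (n - 1 - i))) :
    |∑ i ∈ Finset.range n, g (f^[i] y) - ∑ i ∈ Finset.range n, g (f^[i] z)| ≤
      C * ε ^ α * (1 / (1 - lam ^ α) + 1 / (1 - lamu ^ α)) ∧
    |(1 / (n : ℝ)) * ∑ i ∈ Finset.range n, g (f^[i] y) -
        (1 / (n : ℝ)) * ∑ i ∈ Finset.range n, g (f^[i] z)| ≤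
      C * ε ^ α * (1 / (1 - lam ^ α) + 1 / (1 - lamu ^ α)) / n := by
  obtain ⟨hlam0, hlam1⟩ := hlam
  obtain ⟨hlamu0, hlamu1⟩ := hlamu
  have hlamα : lam ^ α < 1 := Real.rpow_lt_one hlam0.le hlam1 hα0
  have hlamuα : lamu ^ α < 1 := Real.rpow_lt_one hlamu0.le hlamu1 hα0
  have hlamα0 : 0 ≤ lam ^ α := Real.rpow_nonneg hlam0.le α
  have hlamuα0 : 0 ≤ lamu ^ α := Real.rpow_nonneg hlamu0.le α
  have key : |∑ i ∈ Finset.range n, g (f^[i] y) - ∑ i ∈ Finset.range n, g (f^[i] z)| ≤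
      C * ε ^ α * (1 / (1 - lam ^ α) + 1 / (1 - lamu ^ α)) := by
    rw [← Finset.sum_sub_distrib]
    calc |∑ i ∈ Finset.range n, (g (f^[i] y) - g (f^[i] z))|
        ≤ ∑ i ∈ Finset.range n, |g (f^[i] y) - g (f^[i] z)| := Finset.abs_sum_le_sum_abs _ _
      _ ≤ ∑ i ∈ Finset.range n, C * ε ^ α * ((lam ^ α) ^ i + (lamu ^ α) ^ (n - 1 - i)) := by
          refine Finset.sum_le_sum fun i hi => ?_
          have hi' := Finset.mem_range.mp hi
          refine (hg _ _).trans ?_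
          have hd : dist (f^[i] y) (f^[i] z) ^ α ≤
              (ε * (lam ^ i + lamu ^ (n - 1 - i))) ^ α := by
            apply Real.rpow_le_rpow dist_nonneg (hshadow i hi') hα0.le
          refine le_trans (mul_le_mul_of_nonneg_left hd hC) ?_
          have h1 : (ε * (lam ^ i + lamu ^ (n - 1 - i))) ^ α
              = ε ^ α * (lam ^ i + lamu ^ (n - 1 - i)) ^ α := by
            rw [Real.mul_rpow hε.le (by positivity)]
          have h2 : (lam ^ i + lamu ^ (n - 1 - i)) ^ α ≤
              (lam ^ α) ^ i + (lamu ^ α) ^ (n - 1 - i) := by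
            refine (real_rpow_add_le (by positivity) (by positivity) hα0.le hα1).trans ?_
            have e1 : (lam ^ i : ℝ) ^ α = (lam ^ α) ^ i := by
              rw [← Real.rpow_natCast lam i, ← Real.rpow_mul hlam0.le, mul_comm,
                Real.rpow_mul hlam0.le, Real.rpow_natCast]
            have e2 : (lamu ^ (n - 1 - i) : ℝ) ^ α = (lamu ^ α) ^ (n - 1 - i) := by
              rw [← Real.rpow_natCast lamu (n - 1 - i), ← Real.rpow_mul hlamu0.le, mul_comm,
                Real.rpow_mul hlamu0.le, Real.rpow_natCast]
            rw [e1, e2]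
          rw [h1, ← mul_assoc]
          exact mul_le_mul_of_nonneg_left h2 (by positivity)
      _ = C * ε ^ α * (∑ i ∈ Finset.range n, (lam ^ α) ^ i
            + ∑ i ∈ Finset.range n, (lamu ^ α) ^ (n - 1 - i)) := by
          rw [← Finset.mul_sum, Finset.sum_add_distrib]
      _ ≤ C * ε ^ α * (1 / (1 - lam ^ α) + 1 / (1 - lamu ^ α)) := by
          have s1 : ∑ i ∈ Finset.range n, (lam ^ α) ^ i ≤ 1 / (1 - lam ^ α) := by
            rw [one_div, ← tsum_geometric_of_lt_one hlamα0 hlamα]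
            exact Summable.sum_le_tsum _ (fun i _ => pow_nonneg hlamα0 i)
              (summable_geometric_of_lt_one hlamα0 hlamα)
          have s2 : ∑ i ∈ Finset.range n, (lamu ^ α) ^ (n - 1 - i) ≤ 1 / (1 - lamu ^ α) := by
            have : ∑ i ∈ Finset.range n, (lamu ^ α) ^ (n - 1 - i)
                = ∑ j ∈ Finset.range n, (lamu ^ α) ^ j := by
              refine Finset.sum_nbij' (fun i => n - 1 - i) (fun j => n - 1 - j)
                ?_ ?_ ?_ ?_ ?_ <;> intro i hi <;>
                simp only [Finset.mem_range] at * <;> first | omega | (congr 1; omega)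
            rw [this, one_div, ← tsum_geometric_of_lt_one hlamuα0 hlamuα]
            exact Summable.sum_le_tsum _ (fun i _ => pow_nonneg hlamuα0 i)
              (summable_geometric_of_lt_one hlamuα0 hlamuα)
          exact mul_le_mul_of_nonneg_left (add_le_add s1 s2) (by positivity)
  refine ⟨key, ?_⟩
  have hn0 : (0:ℝ) < n := by exact_mod_cast hn
  rw [← mul_sub, abs_mul, abs_of_nonneg (by positivity : (0:ℝ) ≤ 1/(n:ℝ))]
  calc 1 / (n:ℝ) * |∑ i ∈ Finset.range n, g (f^[i] y) - ∑ i ∈ Finset.range n, g (f^[i] z)|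
      ≤ 1 / (n:ℝ) * (C * ε ^ α * (1 / (1 - lam ^ α) + 1 / (1 - lamu ^ α))) :=
        mul_le_mul_of_nonneg_left key (by positivity)
    _ = C * ε ^ α * (1 / (1 - lam ^ α) + 1 / (1 - lamu ^ α)) / n := by ring
end

section
/- Let Λ be a compact metric space and f : Λ → Λ a continuous surjective map. The natural extension (inverse limit) is Λ̂ := {x̂ : ℕ → Λ | f(x̂(n+1)) = x̂(n) for all n ≥ 0}, a subspace of the product Λ^ℕ with the product topology; the shift map f̂ : Λ̂ → Λ̂ is f̂(x̂) = (f(x̂(0)), x̂(0), x̂(1), …); the canonical projection π : Λ̂ → Λ is π(x̂) = x̂(0). Let μ be an f-invariant Borel probability measure on Λ and μ̂ an f̂-invariant Borel probability measure on Λ̂ with π_*μ̂ = μ. Then for every closed set F̂ ⊆ Λ̂ one has μ̂(F̂) = lim_{n→∞} μ(p_n(F̂)), where p_n : Λ̂ → Λ, p_n(x̂) = x̂(n), is the n-th coordinate projection (so that p_n(F̂) is the compact set of n-th coordinates x_{−n} of prehistories x̂ ∈ F̂). -/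
open MeasureTheory Filter

/-- The natural extension (inverse limit) of `f : Λ → Λ`: the space of full prehistories
`(x₀, x₋₁, x₋₂, …)` with `f (x (n+1)) = x n`, as a subspace of `Λ^ℕ` with the
product topology. -/
def NatExt {Λ : Type*} (f : Λ → Λ) : Set (ℕ → Λ) :=
  {x | ∀ n : ℕ, f (x (n + 1)) = x n}

/-- The shift map `f̂` on the natural extension: `f̂ x = (f (x 0), x 0, x 1, …)`. -/
def natExtShift {Λ : Type*} (f : Λ → Λ) : NatExt f → NatExt f := fun x =>
  ⟨fun n => match n with
    | 0 => f (x.val 0)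
    | k + 1 => x.val k,
   by
    intro n
    cases n with
    | zero => rfl
    | succ k => exact x.prop k⟩

/-- if `μ` is `f`-invariant and `μ'` is a shift-invariant probability
measure on the natural extension projecting to `μ`, then for every closed set `F`
of prehistories, `μ' F = lim_n μ (pₙ F)` where `pₙ x = x n` is the `n`-th coordinate
projection (formula (mu-hat) of the paper). -/
theorem measure_of_closed_set_in_natural_extension
    {Λ : Type*} [MetricSpace Λ] [CompactSpace Λ] [MeasurableSpace Λ] [BorelSpace Λ]
    (f : Λ → Λ) (hf : Continuous f) (hsurj : Function.Surjective f)
    (μ : Measure Λ) (hμprob : IsProbabilityMeasure μ) (hinv : μ.map f = μ)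
    (μ' : Measure (NatExt f)) (hμ'prob : IsProbabilityMeasure μ')
    (hμ'inv : μ'.map (natExtShift f) = μ')
    (hproj : μ'.map (fun x : NatExt f => x.val 0) = μ)
    (F : Set (NatExt f)) (hF : IsClosed F) :
    Tendsto (fun n : ℕ => μ ((fun x : NatExt f => x.val n) '' F)) atTop
      (nhds (μ' F)) := by
  set p : ℕ → NatExt f → Λ := fun n x => x.val n with hp
  have hpcont : ∀ n, Continuous (p n) := fun n =>
    (continuous_apply n).comp continuous_subtype_val
  have hpmeas : ∀ n, Measurable (p n) := fun n =>
    (measurable_pi_apply n).comp measurable_subtype_coe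
  -- NatExt is closed, hence compact space
  have hNEclosed : IsClosed (NatExt f) := by
    have : NatExt f = ⋂ n : ℕ, {x : ℕ → Λ | f (x (n + 1)) = x n} := by
      ext x; simp [NatExt, Set.mem_iInter]
    rw [this]
    exact isClosed_iInter fun n =>
      isClosed_eq (hf.comp (continuous_apply (n + 1))) (continuous_apply n)
  haveI : CompactSpace (NatExt f) := isCompact_iff_compactSpace.mp hNEclosed.isCompact
  have hFcomp : IsCompact F := hF.isCompact
  -- the shift is continuous, hence measurable
  have hshiftcont : Continuous (natExtShift f) := by
    apply Continuous.subtype_mk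
    apply continuous_pi
    intro n
    cases n with
    | zero => exact hf.comp (hpcont 0)
    | succ k => exact hpcont k
  -- μ'.map (p n) = μ for all n
  have hmap : ∀ n, μ'.map (p n) = μ := by
    intro n
    induction n with
    | zero => exact hproj
    | succ k ih =>
      have hcomp : p k = (p (k + 1)) ∘ natExtShift f := rfl
      calc μ'.map (p (k + 1)) = (μ'.map (natExtShift f)).map (p (k + 1)) := by
            rw [hμ'inv]
        _ = μ'.map (p k) := by
            rw [Measure.map_map (hpmeas (k + 1)) hshiftcont.measurable, ← hcomp]
        _ = μ := ih
  -- prehistories agreeing at a late coordinate agree at all earlier ones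
  have hstep : ∀ (x y : NatExt f) (d k : ℕ),
      y.val (k + d) = x.val (k + d) → y.val k = x.val k := by
    intro x y d
    induction d with
    | zero => intro k h; simpa using h
    | succ j ih =>
      intro k h
      apply ih
      have h' : y.val (k + j + 1) = x.val (k + j + 1) := by
        simpa [Nat.add_assoc] using h
      calc y.val (k + j) = f (y.val (k + j + 1)) := (y.prop _).symm
        _ = f (x.val (k + j + 1)) := by rw [h']
        _ = x.val (k + j) := x.prop _
  have hagree : ∀ (n : ℕ) (x y : NatExt f), y.val n = x.val n →
      ∀ k ≤ n, y.val k = x.val k := by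
    intro n x y h k hk
    have := hstep x y (n - k) k
    rw [Nat.add_sub_cancel' hk] at this
    exact this h
  -- the sets G n
  set G : ℕ → Set (NatExt f) := fun n => (p n) ⁻¹' ((p n) '' F) with hG
  have hImC : ∀ n, IsCompact ((p n) '' F) := fun n => hFcomp.image (hpcont n)
  have hImM : ∀ n, MeasurableSet ((p n) '' F) := fun n => (hImC n).isClosed.measurableSet
  have hGmeas : ∀ n, MeasurableSet (G n) := fun n => (hpmeas n) (hImM n)
  -- G is antitone
  have hGanti : Antitone G := by
    apply antitone_nat_of_succ_le
    intro n x hx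
    obtain ⟨y, hyF, hy⟩ := hx
    refine ⟨y, hyF, ?_⟩
    show y.val n = x.val n
    calc y.val n = f (y.val (n + 1)) := (y.prop n).symm
      _ = f (x.val (n + 1)) := by rw [show y.val (n+1) = x.val (n+1) from hy]
      _ = x.val n := x.prop n
  -- ⋂ G = F
  have hInter : ⋂ n, G n = F := by
    apply Set.Subset.antisymm
    · intro x hx
      rw [Set.mem_iInter] at hx
      choose y hyF hy using hx
      have hyt : Tendsto y atTop (nhds x) := by
        rw [tendsto_subtype_rng, tendsto_pi_nhds]
        intro k
        apply tendsto_atTop_of_eventually_const (i₀ := k)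
        intro n hn
        exact hagree n x (y n) (hy n) k hn
      rw [← hF.closure_eq]
      exact mem_closure_of_tendsto hyt (Eventually.of_forall hyF)
    · intro x hx
      rw [Set.mem_iInter]
      exact fun n => ⟨x, hx, rfl⟩
  -- measure computation
  have hμG : ∀ n, μ ((p n) '' F) = μ' (G n) := by
    intro n
    rw [← hmap n, Measure.map_apply (hpmeas n) (hImM n)]
  show Tendsto (fun n => μ ((p n) '' F)) atTop (nhds (μ' F))
  simp only [hμG]
  rw [← hInter]
  exact tendsto_measure_iInter_atTop (fun n => (hGmeas n).nullMeasurableSet) hGanti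
    ⟨0, measure_ne_top μ' _⟩
end
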